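/- Let H_A = ⊕_{i ∈ I} H_A^i and H_B = ⊕_{j ∈ J} H_B^j, and let λ be a branched route with branches (I^α, J^α), α in a finite index set. If a linear map U follows λ, then U decomposes as a direct sum U = Σ_α ι^α ∘ U^α ∘ p^α, where p^α is the orthogonal projection onto ⊕_{i ∈ I^α} H_A^i, ι^α is the inclusion of ⊕_{j ∈ J^α} H_B^j, and U^α : ⊕_{i ∈ I^α} H_A^i → ⊕_{j ∈ J^α} H_B^j. Moreover, U restricted to the practical input and output spaces is unitary if and only if every block U^α is unitary. -/

import Mathlib

open scoped Classical

lemma aux_pyth {E : Type*} [NormedAddCommGroup E] [InnerProductSpace ℂ E]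
    {A : Type*} [Fintype A] (v : A → E)
    (h : ∀ a b, a ≠ b → (inner ℂ (v a) (v b) : ℂ) = 0) :
    ‖∑ a, v a‖ ^ 2 = ∑ a, ‖v a‖ ^ 2 := by
  classical
  have key : (inner ℂ (∑ a, v a) (∑ a, v a) : ℂ) = ∑ a, (inner ℂ (v a) (v a) : ℂ) := by
    rw [inner_sum]
    refine Finset.sum_congr rfl fun b _ => ?_
    rw [sum_inner, Finset.sum_eq_single b (fun a _ hab => h a b hab) (by simp)]
  simp only [inner_self_eq_norm_sq_to_K] at key
  exact_mod_cast key

lemma aux_sum_proj {E : Type*} [AddCommMonoid E] [Module ℂ E]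
    {I : Type*} [DecidableEq I] (P : I → (E →ₗ[ℂ] E))
    (hPo : ∀ i i', P i ∘ₗ P i' = if i = i' then P i else 0)
    (s t : Finset I) (x : E) :
    (∑ i ∈ s, P i) ((∑ i' ∈ t, P i') x) = (∑ i ∈ s ∩ t, P i) x := by
  have hPo' : ∀ i i' (y : E), P i (P i' y) = if i = i' then P i y else 0 := by
    intro i i' y
    have := LinearMap.ext_iff.mp (hPo i i') y
    simpa [apply_ite (fun f : E →ₗ[ℂ] E => f y)] using this
  simp only [LinearMap.sum_apply, map_sum, hPo']
  have h1 : ∀ i ∈ s, (∑ i' ∈ t, if i = i' then P i x else 0) = if i ∈ t then P i x else 0 :=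
    fun i _ => Finset.sum_ite_eq t i (fun _ => P i x)
  rw [Finset.sum_comm, Finset.sum_congr rfl h1, Finset.sum_ite_mem]

lemma aux_norm_eq {a b : ℝ} (ha : 0 ≤ a) (hb : 0 ≤ b) (h : a ^ 2 = b ^ 2) : a = b := by
  nlinarith [sq_nonneg (a + b), sq_nonneg (a - b)]

theorem stmt_6 {H K : Type*}
    [NormedAddCommGroup H] [InnerProductSpace ℂ H] [FiniteDimensional ℂ H]
    [NormedAddCommGroup K] [InnerProductSpace ℂ K] [FiniteDimensional ℂ K]
    {I J A : Type*} [Fintype I] [Fintype J] [Fintype A] [DecidableEq I] [DecidableEq J]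
    (P : I → (H →ₗ[ℂ] H)) (Q : J → (K →ₗ[ℂ] K))
    (hPo : ∀ i i', P i ∘ₗ P i' = if i = i' then P i else 0)
    (hPs : ∑ i, P i = LinearMap.id)
    (hPsym : ∀ i, (P i).IsSymmetric)
    (hQo : ∀ j j', Q j ∘ₗ Q j' = if j = j' then Q j else 0)
    (hQs : ∑ j, Q j = LinearMap.id)
    (hQsym : ∀ j, (Q j).IsSymmetric)
    (lam : I → J → Prop)
    (Iα : A → Finset I) (Jα : A → Finset J)
    (hIne : ∀ a, (Iα a).Nonempty) (hJne : ∀ a, (Jα a).Nonempty)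
    (hIdisj : ∀ a b, a ≠ b → Disjoint (Iα a) (Iα b))
    (hJdisj : ∀ a b, a ≠ b → Disjoint (Jα a) (Jα b))
    (hlam : ∀ i j, lam i j ↔ ∃ a, i ∈ Iα a ∧ j ∈ Jα a)
    (U : H →ₗ[ℂ] K)
    (hU : ∀ i j, ¬ lam i j → Q j ∘ₗ U ∘ₗ P i = 0) :
    (U = ∑ a, (∑ j ∈ Jα a, Q j) ∘ₗ U ∘ₗ (∑ i ∈ Iα a, P i)) ∧
    (((∀ x : H, ‖U ((∑ a, ∑ i ∈ Iα a, P i) x)‖ = ‖(∑ a, ∑ i ∈ Iα a, P i) x‖) ∧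
        (⇑U '' {x : H | (∑ a, ∑ i ∈ Iα a, P i) x = x} =
          {y : K | (∑ a, ∑ j ∈ Jα a, Q j) y = y})) ↔
      ∀ a, (∀ x : H, ‖U ((∑ i ∈ Iα a, P i) x)‖ = ‖(∑ i ∈ Iα a, P i) x‖) ∧
        (⇑U '' {x : H | (∑ i ∈ Iα a, P i) x = x} = {y : K | (∑ j ∈ Jα a, Q j) y = y})) := by
  classical
  have hPo' := aux_sum_proj P hPo
  have hQo' := aux_sum_proj Q hQo
  have hPaa : ∀ a (x : H), (∑ i ∈ Iα a, P i) ((∑ i ∈ Iα a, P i) x) = (∑ i ∈ Iα a, P i) x := by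
    intro a x; rw [hPo']; simp
  have hPab : ∀ a b, a ≠ b → ∀ x : H,
      (∑ i ∈ Iα a, P i) ((∑ i ∈ Iα b, P i) x) = 0 := by
    intro a b hab x
    rw [hPo', Finset.disjoint_iff_inter_eq_empty.mp (hIdisj a b hab)]; simp
  have hQaa : ∀ a (y : K), (∑ j ∈ Jα a, Q j) ((∑ j ∈ Jα a, Q j) y) = (∑ j ∈ Jα a, Q j) y := by
    intro a y; rw [hQo']; simp
  have hQab : ∀ a b, a ≠ b → ∀ y : K,
      (∑ j ∈ Jα a, Q j) ((∑ j ∈ Jα b, Q j) y) = 0 := by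
    intro a b hab y
    rw [hQo', Finset.disjoint_iff_inter_eq_empty.mp (hJdisj a b hab)]; simp
  have hPaSym : ∀ (s : Finset I), LinearMap.IsSymmetric (∑ i ∈ s, P i) := by
    intro s x y
    simp only [LinearMap.sum_apply, sum_inner, inner_sum]
    exact Finset.sum_congr rfl fun i _ => hPsym i x y
  have hQaSym : ∀ (s : Finset J), LinearMap.IsSymmetric (∑ j ∈ s, Q j) := by
    intro s x y
    simp only [LinearMap.sum_apply, sum_inner, inner_sum]
    exact Finset.sum_congr rfl fun j _ => hQsym j x y
  -- the decomposition
  have hdec : U = ∑ a, (∑ j ∈ Jα a, Q j) ∘ₗ U ∘ₗ (∑ i ∈ Iα a, P i) := by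
    ext x
    have hx : ∑ i, P i x = x := by
      have := LinearMap.ext_iff.mp hPs x; simpa using this
    have hy : ∀ z : K, ∑ j, Q j z = z := by
      intro z; have := LinearMap.ext_iff.mp hQs z; simpa using this
    simp only [LinearMap.sum_apply, LinearMap.comp_apply]
    have hterm : ∀ a, (∑ j ∈ Jα a, Q j (U (∑ i ∈ Iα a, P i x)))
        = ∑ p ∈ (Jα a) ×ˢ (Iα a), Q p.1 (U (P p.2 x)) := by
      intro a
      rw [Finset.sum_product]
      refine Finset.sum_congr rfl fun j _ => ?_
      rw [map_sum, map_sum]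
    have hdisj : ((Finset.univ : Finset A) : Set A).PairwiseDisjoint
        (fun a => (Jα a) ×ˢ (Iα a)) := by
      intro a _ b _ hab
      refine Finset.disjoint_left.mpr ?_
      rintro ⟨j, i⟩ hj hk
      rw [Finset.mem_product] at hj hk
      exact (Finset.disjoint_left.mp (hJdisj a b hab) hj.1) hk.1
    rw [Finset.sum_congr rfl (fun a _ => hterm a), ← Finset.sum_biUnion hdisj]
    have hsub : (Finset.univ.biUnion fun a => (Jα a) ×ˢ (Iα a)) ⊆
        (Finset.univ ×ˢ Finset.univ) := fun p _ => by simp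
    have hzero : ∀ p ∈ ((Finset.univ ×ˢ Finset.univ) : Finset (J × I)),
        p ∉ Finset.univ.biUnion (fun a => (Jα a) ×ˢ (Iα a)) →
        Q p.1 (U (P p.2 x)) = 0 := by
      rintro ⟨j, i⟩ _ hp
      simp only [Finset.mem_biUnion, Finset.mem_product, Finset.mem_univ, true_and,
        not_exists, not_and] at hp
      have hnl : ¬ lam i j := by
        rw [hlam]; rintro ⟨a, hi, hj⟩; exact hp a hj hi
      have := LinearMap.ext_iff.mp (hU i j hnl) x
      simpa using this
    rw [Finset.sum_subset hsub hzero, Finset.sum_product]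
    calc U x = ∑ j, Q j (U x) := (hy (U x)).symm
      _ = ∑ j, ∑ i, Q j (U (P i x)) := by
          refine Finset.sum_congr rfl fun j _ => ?_
          conv_lhs => rw [← hx]
          rw [map_sum, map_sum]
  -- fixed-point facts
  have hfix : ∀ a (x : H),
      (∑ b, ∑ i ∈ Iα b, P i) ((∑ i ∈ Iα a, P i) x) = (∑ i ∈ Iα a, P i) x := by
    intro a x
    rw [LinearMap.sum_apply,
      Finset.sum_eq_single a (fun b _ hba => hPab b a hba _) (by simp), hPaa]
  have hfixQ : ∀ a (y : K),
      (∑ b, ∑ j ∈ Jα b, Q j) ((∑ j ∈ Jα a, Q j) y) = (∑ j ∈ Jα a, Q j) y := by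
    intro a y
    rw [LinearMap.sum_apply,
      Finset.sum_eq_single a (fun b _ hba => hQab b a hba _) (by simp), hQaa]
  have hUQ : ∀ a (x : H),
      U ((∑ i ∈ Iα a, P i) x) = (∑ j ∈ Jα a, Q j) (U ((∑ i ∈ Iα a, P i) x)) := by
    intro a x
    conv_lhs => rw [hdec]
    rw [LinearMap.sum_apply,
      Finset.sum_eq_single a (fun b _ hba => ?_) (by simp)]
    · rw [LinearMap.comp_apply, LinearMap.comp_apply, hPaa]
    · simp only [LinearMap.comp_apply]
      rw [hPab b a hba, map_zero, map_zero]
  -- orthogonality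
  have hPorth : ∀ a b, a ≠ b → ∀ (x y : H),
      (inner ℂ ((∑ i ∈ Iα a, P i) x) ((∑ i ∈ Iα b, P i) y) : ℂ) = 0 := by
    intro a b hab x y
    rw [hPaSym (Iα a) x _, hPab a b hab, inner_zero_right]
  have himgorth : ∀ a b, a ≠ b → ∀ (x y : H),
      (inner ℂ (U ((∑ i ∈ Iα a, P i) x)) (U ((∑ i ∈ Iα b, P i) y)) : ℂ) = 0 := by
    intro a b hab x y
    rw [hUQ a x, hUQ b y, hQaSym (Jα a) _ _, hQab a b hab, inner_zero_right]
  have hnorm1 : ∀ x : H, ‖(∑ a, ∑ i ∈ Iα a, P i) x‖ ^ 2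
      = ∑ a, ‖(∑ i ∈ Iα a, P i) x‖ ^ 2 := by
    intro x
    rw [LinearMap.sum_apply]
    exact aux_pyth (fun a => (∑ i ∈ Iα a, P i) x) (fun a b hab => hPorth a b hab x x)
  have hnorm2 : ∀ x : H, ‖U ((∑ a, ∑ i ∈ Iα a, P i) x)‖ ^ 2
      = ∑ a, ‖U ((∑ i ∈ Iα a, P i) x)‖ ^ 2 := by
    intro x
    rw [LinearMap.sum_apply, map_sum]
    exact aux_pyth (fun a => U ((∑ i ∈ Iα a, P i) x)) (fun a b hab => himgorth a b hab x x)
  refine ⟨hdec, ?_⟩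
  constructor
  · rintro ⟨hnorm, himg⟩ a
    constructor
    · intro x
      have h := hnorm ((∑ i ∈ Iα a, P i) x)
      rwa [hfix a x] at h
    · apply Set.Subset.antisymm
      · rintro _ ⟨x, hx, rfl⟩
        show (∑ j ∈ Jα a, Q j) (U x) = U x
        have h := hUQ a x
        rw [hx] at h
        exact h.symm
      · intro y hy
        have hy' : (∑ j ∈ Jα a, Q j) y = y := hy
        have hyq : (∑ b, ∑ j ∈ Jα b, Q j) y = y := by
          conv_lhs => rw [← hy']
          rw [hfixQ a y, hy']
        have hmem : y ∈ (⇑U '' {x : H | (∑ b, ∑ i ∈ Iα b, P i) x = x}) := by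
          rw [himg]; exact hyq
        obtain ⟨x, hx, hxy⟩ := hmem
        refine ⟨(∑ i ∈ Iα a, P i) x, hPaa a x, ?_⟩
        have hx' : (∑ b, ∑ i ∈ Iα b, P i) x = x := hx
        have e0 : U x = ∑ b, U ((∑ i ∈ Iα b, P i) x) := by
          conv_lhs => rw [← hx']
          rw [LinearMap.sum_apply, map_sum]
        have e2 : (∑ j ∈ Jα a, Q j) (U x) = U ((∑ i ∈ Iα a, P i) x) := by
          rw [e0, map_sum, Finset.sum_eq_single a (fun b _ hba => ?_) (by simp)]
          · rw [← hUQ a x]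
          · rw [hUQ b x, hQab a b hba.symm]
        rw [← e2, hxy, hy']
  · intro hbr
    constructor
    · intro x
      refine aux_norm_eq (norm_nonneg _) (norm_nonneg _) ?_
      rw [hnorm2 x, hnorm1 x]
      exact Finset.sum_congr rfl fun a _ => by rw [(hbr a).1 x]
    · apply Set.Subset.antisymm
      · rintro _ ⟨x, hx, rfl⟩
        show (∑ a, ∑ j ∈ Jα a, Q j) (U x) = U x
        have hx' : (∑ a, ∑ i ∈ Iα a, P i) x = x := hx
        have e1 : U x = ∑ a, U ((∑ i ∈ Iα a, P i) x) := by
          conv_lhs => rw [← hx']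
          rw [LinearMap.sum_apply, map_sum]
        rw [e1, map_sum]
        refine Finset.sum_congr rfl fun a _ => ?_
        rw [hUQ a x, hfixQ a]
      · intro y hy
        have hy' : (∑ a, ∑ j ∈ Jα a, Q j) y = y := hy
        have hmem : ∀ a, ∃ x, (∑ i ∈ Iα a, P i) x = x ∧ U x = (∑ j ∈ Jα a, Q j) y := by
          intro a
          have h2 : (∑ j ∈ Jα a, Q j) y ∈ (⇑U '' {x : H | (∑ i ∈ Iα a, P i) x = x}) := by
            rw [(hbr a).2]; exact hQaa a y
          obtain ⟨x, hx1, hx2⟩ := h2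
          exact ⟨x, hx1, hx2⟩
        choose xa hx1 hx2 using hmem
        refine ⟨∑ a, xa a, ?_, ?_⟩
        · show (∑ a, ∑ i ∈ Iα a, P i) (∑ a, xa a) = ∑ a, xa a
          rw [map_sum]
          refine Finset.sum_congr rfl fun b _ => ?_
          conv_lhs => rw [← hx1 b]
          rw [hfix b (xa b), hx1 b]
        · show U (∑ a, xa a) = y
          rw [map_sum, Finset.sum_congr rfl (fun a _ => hx2 a)]
          rw [LinearMap.sum_apply] at hy'
          exact hy'
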